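/- Let X be a real n×p matrix whose columns are linearly independent, Y ∈ ℝⁿ, λ ≥ 0, α ∈ (0, 1], let C be a p×p real diagonal matrix with diagonal entries in {−1, 0, 1}, set S(λ) := C Xᵀ X C + λ(1−α) C², let S(λ)⁻ satisfy the four Penrose equations for S(λ) with S(λ) S(λ)⁻ = S(λ)⁻ S(λ) = C², and put û := S(λ)⁻ (C Xᵀ Y − αλ C² 𝟙). Then û globally minimizes the orthant elastic net criterion: E_C(û) ≤ E_C(u) for every u ∈ ℝᵖ, where E_C(u) = ½ Yᵀ Y − uᵀ C Xᵀ Y + ½ uᵀ C Xᵀ X C u + λα uᵀ C² 𝟙 + λ(1−α)/2 · uᵀ C² u. -/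
import Mathlib


open Matrix BigOperators

/-- `B` is a Moore–Penrose generalized inverse of `A`:
the four Penrose equations hold. -/
def IsMoorePenrose {p : ℕ} (A B : Matrix (Fin p) (Fin p) ℝ) : Prop :=
  A * B * A = A ∧ B * A * B = B ∧ (A * B)ᵀ = A * B ∧ (B * A)ᵀ = B * A

theorem orthant_elastic_net_global_minimizer {n p : ℕ}
    (X : Matrix (Fin n) (Fin p) ℝ)
    (hX : LinearIndependent ℝ (fun j : Fin p => fun i : Fin n => X i j))
    (Y : Fin n → ℝ) (lam α : ℝ) (hlam : 0 ≤ lam) (hα : α ∈ Set.Ioc (0 : ℝ) 1)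
    (C : Matrix (Fin p) (Fin p) ℝ) (hdiag : C.IsDiag)
    (hent : ∀ i, C i i = -1 ∨ C i i = 0 ∨ C i i = 1)
    (Slam Sinv : Matrix (Fin p) (Fin p) ℝ)
    (hSlam : Slam = C * Xᵀ * X * C + (lam * (1 - α)) • (C * C))
    (hMP : IsMoorePenrose Slam Sinv)
    (hleft : Slam * Sinv = C * C)
    (hright : Sinv * Slam = C * C)
    (uhat : Fin p → ℝ)
    (huhat : uhat = Sinv.mulVec ((C * Xᵀ).mulVec Y - (α * lam) • (C * C).mulVec (fun _ => (1 : ℝ))))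
    (EC : (Fin p → ℝ) → ℝ)
    (hEC : ∀ u, EC u = (1 / 2) * (Y ⬝ᵥ Y) - u ⬝ᵥ ((C * Xᵀ).mulVec Y)
        + (1 / 2) * (u ⬝ᵥ (C * Xᵀ * X * C).mulVec u)
        + lam * α * (u ⬝ᵥ (C * C).mulVec (fun _ => (1 : ℝ)))
        + lam * (1 - α) / 2 * (u ⬝ᵥ (C * C).mulVec u)) :
    ∀ u : Fin p → ℝ, EC uhat ≤ EC u := by
  obtain ⟨hα0, hα1⟩ := hα
  -- C is the diagonal matrix of its diagonal entries
  have hCdiag : Matrix.diagonal (fun i => C i i) = C := hdiag.diagonal_diag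
  have hCsymm : Cᵀ = C := hdiag.isSymm
  -- C³ = C
  have hC3 : C * C * C = C := by
    rw [← hCdiag]
    simp only [Matrix.diagonal_mul_diagonal]
    ext i j
    rcases eq_or_ne i j with rfl | hij
    · simp only [Matrix.diagonal_apply_eq]
      rcases hent i with h | h | h <;> rw [h] <;> norm_num
    · rw [Matrix.diagonal_apply_ne _ hij, Matrix.diagonal_apply_ne _ hij]
  have hC4 : (C * C) * (C * C) = C * C := by
    rw [← Matrix.mul_assoc, hC3]
  have hC2CX : (C * C) * (C * Xᵀ) = C * Xᵀ := by
    rw [← Matrix.mul_assoc, hC3]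
  -- notation
  set b : Fin p → ℝ := (C * Xᵀ).mulVec Y with hb
  set c : Fin p → ℝ := (C * C).mulVec (fun _ => (1 : ℝ)) with hc
  set d : Fin p → ℝ := b - (α * lam) • c with hd
  -- C² d = d
  have hC2d : (C * C).mulVec d = d := by
    rw [hd, Matrix.mulVec_sub, Matrix.mulVec_smul, hb, hc,
      Matrix.mulVec_mulVec, Matrix.mulVec_mulVec, hC2CX, hC4]
  -- Slam uhat = d
  have hSu : Slam.mulVec uhat = d := by
    rw [huhat, Matrix.mulVec_mulVec, hleft]
    exact hC2d
  -- Slam is symmetric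
  have hSsym : Slamᵀ = Slam := by
    rw [hSlam]
    simp [Matrix.transpose_add, Matrix.transpose_smul, Matrix.transpose_mul,
      Matrix.transpose_transpose, hCsymm, Matrix.mul_assoc]
  -- symmetry of the bilinear form
  have hsymm : ∀ x y : Fin p → ℝ, x ⬝ᵥ Slam.mulVec y = y ⬝ᵥ Slam.mulVec x := by
    intro x y
    conv_lhs => rw [Matrix.dotProduct_mulVec, ← hSsym, Matrix.vecMul_transpose]
    exact dotProduct_comm _ _
  -- positive semidefiniteness
  have hpsd : ∀ v : Fin p → ℝ, 0 ≤ v ⬝ᵥ Slam.mulVec v := by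
    intro v
    have hselfn : ∀ w : Fin n → ℝ, 0 ≤ w ⬝ᵥ w := fun w =>
      Finset.sum_nonneg fun i _ => mul_self_nonneg (w i)
    have hselfp : ∀ w : Fin p → ℝ, 0 ≤ w ⬝ᵥ w := fun w =>
      Finset.sum_nonneg fun i _ => mul_self_nonneg (w i)
    have h1 : v ⬝ᵥ (C * Xᵀ * X * C).mulVec v
        = ((X * C).mulVec v) ⬝ᵥ ((X * C).mulVec v) := by
      have hfac : C * Xᵀ * X * C = (X * C)ᵀ * (X * C) := by
        rw [Matrix.transpose_mul, hCsymm, Matrix.mul_assoc]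
      rw [hfac, ← Matrix.mulVec_mulVec, Matrix.dotProduct_mulVec, Matrix.vecMul_transpose]
    have h2 : v ⬝ᵥ (C * C).mulVec v = (C.mulVec v) ⬝ᵥ (C.mulVec v) := by
      conv_lhs => rw [← hCsymm]
      rw [← Matrix.mulVec_mulVec, Matrix.dotProduct_mulVec, Matrix.vecMul_transpose, hCsymm]
    rw [hSlam, Matrix.add_mulVec, Matrix.smul_mulVec, dotProduct_add,
      dotProduct_smul, h1, h2]
    have hcoef : 0 ≤ lam * (1 - α) := mul_nonneg hlam (by linarith)
    have h3 : 0 ≤ lam * (1 - α) * ((C.mulVec v) ⬝ᵥ (C.mulVec v)) :=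
      mul_nonneg hcoef (hselfp _)
    simp only [smul_eq_mul]
    linarith [hselfn ((X * C).mulVec v)]
  -- rewrite EC in terms of Slam and d
  have hEC' : ∀ w : Fin p → ℝ, EC w
      = (1 / 2) * (Y ⬝ᵥ Y) - w ⬝ᵥ d + (1 / 2) * (w ⬝ᵥ Slam.mulVec w) := by
    intro w
    rw [hEC w, hd]
    have h1 : w ⬝ᵥ (b - (α * lam) • c) = w ⬝ᵥ b - (α * lam) * (w ⬝ᵥ c) := by
      rw [dotProduct_sub, dotProduct_smul, smul_eq_mul]
    have h2 : w ⬝ᵥ Slam.mulVec w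
        = w ⬝ᵥ (C * Xᵀ * X * C).mulVec w + lam * (1 - α) * (w ⬝ᵥ (C * C).mulVec w) := by
      rw [hSlam, Matrix.add_mulVec, Matrix.smul_mulVec, dotProduct_add,
        dotProduct_smul, smul_eq_mul]
    rw [h1, h2, hb, hc]
    ring
  -- main estimate
  intro u
  set v : Fin p → ℝ := u - uhat with hv
  have hu : u = uhat + v := by rw [hv]; abel
  have hexp : EC u = EC uhat + (1 / 2) * (v ⬝ᵥ Slam.mulVec v) := by
    rw [hEC' u, hEC' uhat, hu]
    have h1 : (uhat + v) ⬝ᵥ d = uhat ⬝ᵥ d + v ⬝ᵥ d := add_dotProduct _ _ _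
    have h2 : (uhat + v) ⬝ᵥ Slam.mulVec (uhat + v)
        = uhat ⬝ᵥ Slam.mulVec uhat + 2 * (v ⬝ᵥ Slam.mulVec uhat) + v ⬝ᵥ Slam.mulVec v := by
      rw [Matrix.mulVec_add, dotProduct_add, add_dotProduct, add_dotProduct, hsymm uhat v]
      ring
    have h3 : v ⬝ᵥ Slam.mulVec uhat = v ⬝ᵥ d := by rw [hSu]
    rw [h1, h2, h3]
    ring
  have := hpsd v
  linarith
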